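/- With P, Q, L as in the Kuchment parametrisation (P orthogonal projection, Q = 1-P, L self adjoint with PL = LP = 0), define S(k) = -P - Q(L + ik)^{-1}(L - ik)Q for real k ≠ 0. Then S(k) is independent of k if and only if L = 0, in which case S(k) = 1 - 2P. -/

import Mathlib

open Matrix

/-- The edge S-matrix in the Kuchment projector parametrisation:
S(k) = -P - Q (L + ik)⁻¹ (L - ik) Q with Q = 1 - P. -/
noncomputable def SPL {n : Type*} [Fintype n] [DecidableEq n]
    (P L : Matrix n n ℂ) (k : ℂ) : Matrix n n ℂ :=
  -P - (1 - P) * (L + (Complex.I * k) • 1)⁻¹ * (L - (Complex.I * k) • 1) * (1 - P)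

open scoped ComplexOrder in
lemma det_unit_aux {n : Type*} [Fintype n] [DecidableEq n]
    (L : Matrix n n ℂ) (hL : L.IsHermitian) (c : ℂ) (hc : star c = -c) (hc0 : c ≠ 0) :
    IsUnit (L + c • (1 : Matrix n n ℂ)).det := by
  rw [isUnit_iff_ne_zero]
  intro hdet
  obtain ⟨v, hv, hMv⟩ := Matrix.exists_mulVec_eq_zero_iff.2 hdet
  have hLv : L *ᵥ v = -(c • v) := by
    have h : L *ᵥ v + c • v = 0 := by
      simpa [Matrix.add_mulVec, Matrix.smul_mulVec, Matrix.one_mulVec] using hMv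
    linear_combination (norm := module) h
  set s : ℂ := star v ⬝ᵥ v with hs
  have hss : star s = s := by
    rw [hs, ← Matrix.star_dotProduct_star, star_star]
  have hcc : star v ⬝ᵥ (L *ᵥ v) = -(c * s) := by
    rw [hLv]; simp [smul_eq_mul, dotProduct_smul, hs]
  have hself : star (star v ⬝ᵥ (L *ᵥ v)) = star v ⬝ᵥ (L *ᵥ v) := by
    conv_lhs => rw [Matrix.star_dotProduct, star_star, Matrix.star_mulVec, hL.eq,
      ← Matrix.dotProduct_mulVec]
  have hs0 : s = 0 := by
    have h1 := hself
    rw [hcc, star_neg, star_mul', hss, hc] at h1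
    have h2 : (2 * c) * s = 0 := by linear_combination h1
    rcases mul_eq_zero.1 h2 with h | h
    · exact absurd h (by simpa using hc0)
    · exact h
  exact hv (dotProduct_star_self_eq_zero.1 (hs ▸ hs0))

lemma SPL_form {n : Type*} [Fintype n] [DecidableEq n]
    (P L : Matrix n n ℂ) (hP2 : P * P = P) (hPL : P * L = 0) (hLP : L * P = 0)
    (c : ℂ) (hc : c ≠ 0)
    (hdet : IsUnit (L + c • (1 : Matrix n n ℂ)).det) (k : ℂ) (hk : Complex.I * k = c) :
    SPL P L k = -1 - (2:ℂ) • P + (2 * c) • (L + c • (1 : Matrix n n ℂ))⁻¹ := by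
  set M : Matrix n n ℂ := L + c • 1 with hM
  set X : Matrix n n ℂ := M⁻¹ with hX
  have hXM : X * M = 1 := Matrix.nonsing_inv_mul _ hdet
  have hMX : M * X = 1 := Matrix.mul_nonsing_inv _ hdet
  have hMP : M * P = c • P := by
    rw [hM, add_mul, hLP, Matrix.smul_mul, one_mul, zero_add]
  have hPM : P * M = c • P := by
    rw [hM, mul_add, hPL, Matrix.mul_smul, mul_one, zero_add]
  have hXP : X * P = c⁻¹ • P := by
    have h1 : X * (M * P) = P := by rw [← mul_assoc, hXM, one_mul]
    rw [hMP, Matrix.mul_smul] at h1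
    calc X * P = c⁻¹ • (c • (X * P)) := by
            rw [smul_smul, inv_mul_cancel₀ hc, one_smul]
      _ = c⁻¹ • P := by rw [h1]
  have hPX : P * X = c⁻¹ • P := by
    have h1 : (P * M) * X = P := by rw [mul_assoc, hMX, mul_one]
    rw [hPM, Matrix.smul_mul] at h1
    calc P * X = c⁻¹ • (c • (P * X)) := by
            rw [smul_smul, inv_mul_cancel₀ hc, one_smul]
      _ = c⁻¹ • P := by rw [h1]
  have hsub : L - c • (1 : Matrix n n ℂ) = M - (2 * c) • 1 := by
    rw [hM]; module
  rw [SPL, hk, ← hM, ← hX, hsub]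
  simp only [mul_sub, sub_mul, mul_add, add_mul, mul_one, one_mul,
    Matrix.mul_smul, Matrix.smul_mul, smul_smul, hXM, hMX, hXP, hPX, hP2, hPM, hMP]
  match_scalars <;> field_simp <;> ring

/-- with P an orthogonal projection, Q = 1-P and L self adjoint with
PL = LP = 0, the S-matrix S(k) is independent of k (for real k ≠ 0) iff L = 0,
in which case S(k) = 1 - 2P. -/
theorem stmt_4 (E : ℕ) (P L : Matrix (Fin (2*E)) (Fin (2*E)) ℂ)
    (hP : P.IsHermitian) (hP2 : P * P = P)
    (hL : L.IsHermitian) (hPL : P * L = 0) (hLP : L * P = 0) :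
    ((∀ k₁ k₂ : ℝ, k₁ ≠ 0 → k₂ ≠ 0 → SPL P L (k₁ : ℂ) = SPL P L (k₂ : ℂ)) ↔ L = 0) ∧
    (L = 0 → ∀ k : ℝ, k ≠ 0 → SPL P L (k : ℂ) = 1 - 2 • P) := by
  have hnum : ∀ k : ℝ, k ≠ 0 → (Complex.I * (k : ℂ)) ≠ 0 := by
    intro k hk
    simp [Complex.I_ne_zero, Complex.ofReal_eq_zero, hk]
  have hstar : ∀ k : ℝ, star (Complex.I * (k : ℂ)) = -(Complex.I * k) := by
    intro k
    simp [star_mul', Complex.conj_I, Complex.conj_ofReal, mul_comm]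
  have hdet : ∀ k : ℝ, k ≠ 0 →
      IsUnit (L + (Complex.I * (k:ℂ)) • (1 : Matrix (Fin (2*E)) (Fin (2*E)) ℂ)).det :=
    fun k hk => det_unit_aux L hL _ (hstar k) (hnum k hk)
  have hform : ∀ k : ℝ, k ≠ 0 → SPL P L (k : ℂ) =
      -1 - (2:ℂ) • P + (2 * (Complex.I * k)) •
        (L + (Complex.I * (k:ℂ)) • (1 : Matrix (Fin (2*E)) (Fin (2*E)) ℂ))⁻¹ :=
    fun k hk => SPL_form P L hP2 hPL hLP _ (hnum k hk) (hdet k hk) _ rfl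
  -- the L = 0 case
  have hzero : L = 0 → ∀ k : ℝ, k ≠ 0 → SPL P L (k : ℂ) = 1 - 2 • P := by
    intro h0 k hk
    subst h0
    have hinv : ((Complex.I * (k:ℂ)) • (1 : Matrix (Fin (2*E)) (Fin (2*E)) ℂ))⁻¹
        = (Complex.I * (k:ℂ))⁻¹ • 1 := by
      apply Matrix.inv_eq_right_inv
      rw [Matrix.smul_mul, Matrix.mul_smul, one_mul, smul_smul,
        mul_inv_cancel₀ (hnum k hk), one_smul]
    rw [hform k hk, zero_add, hinv, smul_smul,
      mul_assoc, mul_inv_cancel₀ (hnum k hk), mul_one]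
    have h2 : (2:ℕ) • P = (2:ℂ) • P := by
      rw [← Nat.cast_smul_eq_nsmul (R := ℂ)]; norm_num
    rw [h2]
    module
  refine ⟨⟨?_, ?_⟩, hzero⟩
  · intro hconst
    have h12 := hconst 1 2 one_ne_zero two_ne_zero
    set M₁ : Matrix (Fin (2*E)) (Fin (2*E)) ℂ := L + (Complex.I * ((1:ℝ):ℂ)) • 1 with hM1
    set M₂ : Matrix (Fin (2*E)) (Fin (2*E)) ℂ := L + (Complex.I * ((2:ℝ):ℂ)) • 1 with hM2
    rw [hform 1 one_ne_zero, hform 2 two_ne_zero, ← hM1, ← hM2] at h12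
    have hsm : (2 * (Complex.I * ((1:ℝ):ℂ))) • M₁⁻¹ = (2 * (Complex.I * ((2:ℝ):ℂ))) • M₂⁻¹ := by
      have := h12
      linear_combination (norm := module) this
    have hinv12 : M₁⁻¹ = (2:ℂ) • M₂⁻¹ := by
      have h2I : (2 * Complex.I) ≠ 0 := by simp [Complex.I_ne_zero]
      calc M₁⁻¹ = (2 * Complex.I)⁻¹ • ((2 * (Complex.I * ((1:ℝ):ℂ))) • M₁⁻¹) := by
            rw [smul_smul]; push_cast; rw [mul_one, inv_mul_cancel₀ h2I, one_smul]
        _ = (2 * Complex.I)⁻¹ • ((2 * (Complex.I * ((2:ℝ):ℂ))) • M₂⁻¹) := by rw [hsm]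
        _ = (2:ℂ) • M₂⁻¹ := by
            rw [smul_smul]; push_cast
            rw [show (2 * Complex.I)⁻¹ * (2 * (Complex.I * 2)) = 2 by
              field_simp]
    have hd1 := Matrix.mul_nonsing_inv M₁ (by simpa [hM1] using hdet 1 one_ne_zero)
    have hd2 := Matrix.nonsing_inv_mul M₂ (by simpa [hM2] using hdet 2 two_ne_zero)
    have hM2eq : M₂ = (2:ℂ) • M₁ := by
      calc M₂ = 1 * M₂ := (one_mul _).symm
        _ = (M₁ * M₁⁻¹) * M₂ := by rw [hd1]
        _ = M₁ * ((2:ℂ) • M₂⁻¹) * M₂ := by rw [hinv12]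
        _ = (2:ℂ) • (M₁ * (M₂⁻¹ * M₂)) := by
            rw [Matrix.mul_smul, Matrix.smul_mul, mul_assoc]
        _ = (2:ℂ) • M₁ := by rw [hd2, mul_one]
    rw [hM1, hM2] at hM2eq
    have : L = (2:ℂ) • L := by
      have := hM2eq
      push_cast at this
      linear_combination (norm := module) this
    have h0 : (0:Matrix (Fin (2*E)) (Fin (2*E)) ℂ) = (1:ℂ) • L := by
      linear_combination (norm := module) this
    simpa using h0.symm
  · intro h0 k₁ k₂ hk1 hk2
    rw [hzero h0 k₁ hk1, hzero h0 k₂ hk2]
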